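/- arXiv:2005.08181 — 5 statements merged into one kernel-verified Lean document; each statement's English description precedes it below -/
import Mathlib

section
/- Let W ⊆ K^E be a linear subspace. Then the dimensions of Hadamard powers are weakly increasing: for all s' ≤ s in ℕ_{≥1}, dim_K W^{⋆s'} ≤ dim_K W^{⋆s}. -/
/-- The `s`-fold Hadamard power of a subspace `W ⊆ K^E`. -/
noncomputable def hadPow {K : Type*} [Field K] {E : Type*}
    (W : Submodule K (E → K)) (s : ℕ) : Submodule K (E → K) :=
  Submodule.span K {v | ∃ w : Fin s → (E → K), (∀ i, w i ∈ W) ∧ v = ∏ i, w i}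

namespace HadAux

open Submodule Module

variable {K : Type*} [Field K] {E : Type*}

-- Coordinate projection onto a set `T` of coordinates.
open Classical in
noncomputable def proj (T : Set E) : (E → K) →ₗ[K] (E → K) where
  toFun v := fun e => if e ∈ T then v e else 0
  map_add' u v := by
    classical
    funext e; by_cases h : e ∈ T <;> simp [h]
  map_smul' c v := by
    classical
    funext e; by_cases h : e ∈ T <;> simp [h]

open Classical in
lemma proj_apply (T : Set E) (v : E → K) (e : E) :
    proj T v e = if e ∈ T then v e else 0 := rfl

lemma mem_ker_proj {T : Set E} {v : E → K} :
    v ∈ LinearMap.ker (proj T) ↔ ∀ e ∈ T, v e = 0 := by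
  classical
  constructor
  · intro h e he
    have := congrFun (LinearMap.mem_ker.1 h) e
    simpa [proj_apply, he] using this
  · intro h
    rw [LinearMap.mem_ker]
    funext e
    by_cases he : e ∈ T <;> simp [proj_apply, he, h e]

/-- Multiplication by a fixed vector, as a linear map. -/
noncomputable def mulL (b : E → K) : (E → K) →ₗ[K] (E → K) where
  toFun v := b * v
  map_add' u v := mul_add b u v
  map_smul' c v := by simpa using mul_smul_comm c b v

lemma mulL_apply (b v : E → K) : mulL b v = b * v := rfl

/-- Span of all pairwise products. -/
noncomputable def mulSpan (A B : Submodule K (E → K)) : Submodule K (E → K) :=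
  Submodule.span K {v | ∃ a ∈ A, ∃ b ∈ B, v = a * b}

variable [Fintype E]

lemma aux1 (A : Submodule K (E → K)) (f : (E → K) →ₗ[K] (E → K)) :
    finrank K (A.map f) + finrank K (A ⊓ LinearMap.ker f : Submodule K (E → K))
      = finrank K A := by
  have h := LinearMap.finrank_range_add_finrank_ker (f.domRestrict A)
  rw [LinearMap.range_domRestrict, LinearMap.ker_domRestrict] at h
  rw [← h]
  congr 1
  rw [← Submodule.finrank_map_subtype_eq A ((LinearMap.ker f).comap A.subtype),
    Submodule.map_comap_subtype]

lemma step1 (A : Submodule K (E → K)) (f g : (E → K) →ₗ[K] (E → K)) :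
    finrank K (A.map f)
      ≤ finrank K (A.map g) + finrank K ((A ⊓ LinearMap.ker g).map f) := by
  have h1 := aux1 A f
  have h2 := aux1 A g
  have h3 := aux1 (A ⊓ LinearMap.ker g) f
  have h4 : finrank K ((A ⊓ LinearMap.ker g) ⊓ LinearMap.ker f : Submodule K (E → K))
      ≤ finrank K (A ⊓ LinearMap.ker f : Submodule K (E → K)) :=
    Submodule.finrank_mono (le_inf (inf_le_left.trans inf_le_left) inf_le_right)
  omega

lemma step2 (A : Submodule K (E → K)) (f g : (E → K) →ₗ[K] (E → K))
    (hk : A ⊓ LinearMap.ker f = A ⊓ LinearMap.ker g) :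
    finrank K (A.map f) = finrank K (A.map g) := by
  have h1 := aux1 A f
  have h2 := aux1 A g
  rw [hk] at h1
  omega

lemma key (B : Submodule K (E → K)) :
    ∀ bs : List (E → K), (∀ b ∈ bs, b ∈ B) → ∀ A : Submodule K (E → K),
      finrank K (A.map (proj {e | ∃ b ∈ bs, b e ≠ 0})) ≤ finrank K (mulSpan A B) := by
  classical
  intro bs
  induction bs with
  | nil =>
      intro _ A
      have hz : proj (K := K) {e : E | ∃ b ∈ ([] : List (E → K)), b e ≠ 0} = 0 := by
        apply LinearMap.ext
        intro v
        funext e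
        simp [proj_apply]
      rw [hz, Submodule.map_zero]
      simp
  | cons b bs ih =>
      intro hbs A
      have hbs' : ∀ b' ∈ bs, b' ∈ B := fun b' hb' => hbs b' (List.mem_cons_of_mem b hb')
      have hbB : b ∈ B := hbs b List.mem_cons_self
      set Tb : Set E := {e | b e ≠ 0} with hTb
      set U : Set E := {e | ∃ b' ∈ bs, b' e ≠ 0} with hU
      have hS : {e | ∃ b' ∈ (b :: bs), b' e ≠ 0} = Tb ∪ U := by
        ext e
        simp only [Set.mem_setOf_eq, Set.mem_union, List.mem_cons, hTb, hU]
        constructor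
        · rintro ⟨b', hb' | hb', hne⟩
          · left; rw [← hb']; exact hne
          · right; exact ⟨b', hb', hne⟩
        · rintro (hne | ⟨b', hb', hne⟩)
          · exact ⟨b, Or.inl rfl, hne⟩
          · exact ⟨b', Or.inr hb', hne⟩
      set A0 : Submodule K (E → K) := A ⊓ LinearMap.ker (proj Tb) with hA0
      have e1 : finrank K (A.map (proj (Tb ∪ U)))
          ≤ finrank K (A.map (proj Tb)) + finrank K (A0.map (proj (Tb ∪ U))) :=
        step1 A (proj (Tb ∪ U)) (proj Tb)
      have e2 : finrank K (A0.map (proj (Tb ∪ U))) = finrank K (A0.map (proj U)) := by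
        apply step2
        ext v
        simp only [Submodule.mem_inf, hA0, mem_ker_proj]
        constructor
        · rintro ⟨⟨hvA, hvT⟩, hvTU⟩
          exact ⟨⟨hvA, hvT⟩, fun e he => hvTU e (Or.inr he)⟩
        · rintro ⟨⟨hvA, hvT⟩, hvU⟩
          refine ⟨⟨hvA, hvT⟩, fun e he => ?_⟩
          rcases he with he | he
          · exact hvT e he
          · exact hvU e he
      have e3 : finrank K (A0.map (proj U)) ≤ finrank K (mulSpan A0 B) := ih hbs' A0
      have e4 : finrank K (A.map (proj Tb)) = finrank K (A.map (mulL b)) := by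
        apply step2
        have : LinearMap.ker (proj (K := K) Tb) = LinearMap.ker (mulL b) := by
          ext v
          rw [mem_ker_proj, LinearMap.mem_ker, mulL_apply]
          constructor
          · intro h
            funext e
            by_cases he : b e = 0
            · simp [he]
            · simp [h e he]
          · intro h e he
            have := congrFun h e
            simp only [Pi.mul_apply, Pi.zero_apply] at this
            rcases mul_eq_zero.1 this with h' | h'
            · exact absurd h' he
            · exact h'
        rw [this]
      -- the two pieces inside mulSpan A B
      set X : Submodule K (E → K) := A.map (mulL b) with hX
      set Y : Submodule K (E → K) := mulSpan A0 B with hY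
      have hXle : X ≤ mulSpan A B := by
        rintro v ⟨a, ha, rfl⟩
        exact Submodule.subset_span ⟨a, ha, b, hbB, (mul_comm b a).symm ▸ rfl⟩
      have hYle : Y ≤ mulSpan A B :=
        Submodule.span_mono (by
          rintro v ⟨a, ha, b', hb', rfl⟩
          exact ⟨a, ha.1, b', hb', rfl⟩)
      have hXsupp : ∀ v ∈ X, ∀ e, e ∉ Tb → v e = 0 := by
        rintro v ⟨a, ha, rfl⟩ e he
        have : b e = 0 := by
          by_contra hne
          exact he hne
        simp [mulL_apply, this]
      have hYsupp : ∀ v ∈ Y, ∀ e ∈ Tb, v e = 0 := by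
        intro v hv
        have : Y ≤ LinearMap.ker (proj Tb) := by
          rw [hY, mulSpan, Submodule.span_le]
          rintro u ⟨a, ha, b', hb', rfl⟩
          rw [SetLike.mem_coe, mem_ker_proj]
          intro e he
          have ha0 : a e = 0 := mem_ker_proj.1 ha.2 e he
          simp [ha0]
        exact mem_ker_proj.1 (this hv)
      have hXY : X ⊓ Y = ⊥ := by
        rw [eq_bot_iff]
        rintro v ⟨hvX, hvY⟩
        simp only [Submodule.mem_bot]
        funext e
        by_cases he : e ∈ Tb
        · exact hYsupp v hvY e he
        · exact hXsupp v hvX e he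
      have e5 : finrank K X + finrank K Y ≤ finrank K (mulSpan A B) := by
        have h6 := Submodule.finrank_sup_add_finrank_inf_eq X Y
        rw [hXY] at h6
        simp only [finrank_bot, add_zero] at h6
        have h7 : finrank K (X ⊔ Y : Submodule K (E → K)) ≤ finrank K (mulSpan A B) :=
          Submodule.finrank_mono (sup_le hXle hYle)
        omega
      rw [hS]
      calc finrank K (A.map (proj (Tb ∪ U)))
          ≤ finrank K (A.map (proj Tb)) + finrank K (A0.map (proj (Tb ∪ U))) := e1
        _ = finrank K X + finrank K (A0.map (proj U)) := by rw [e2, e4]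
        _ ≤ finrank K X + finrank K Y := by exact Nat.add_le_add_left e3 _
        _ ≤ finrank K (mulSpan A B) := e5

lemma key2 (A B : Submodule K (E → K))
    (h : ∀ e, (∃ a ∈ A, a e ≠ 0) → ∃ b ∈ B, b e ≠ 0) :
    finrank K A ≤ finrank K (mulSpan A B) := by
  classical
  set g : E → (E → K) := fun e =>
    if he : ∃ b ∈ B, b e ≠ 0 then he.choose else 0 with hg
  set bs : List (E → K) := (Finset.univ : Finset E).toList.map g with hbs
  have hmem : ∀ b ∈ bs, b ∈ B := by
    intro b hb
    rw [hbs, List.mem_map] at hb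
    obtain ⟨e, _, rfl⟩ := hb
    by_cases he : ∃ b ∈ B, b e ≠ 0
    · simp only [hg, dif_pos he]
      exact he.choose_spec.1
    · simp only [hg, dif_neg he]
      exact B.zero_mem
  have hk := key B bs hmem A
  set S : Set E := {e | ∃ b ∈ bs, b e ≠ 0} with hSdef
  have hker : A ⊓ LinearMap.ker (proj S) = ⊥ := by
    rw [eq_bot_iff]
    rintro v ⟨hvA, hvk⟩
    simp only [Submodule.mem_bot]
    funext e
    by_contra hne
    have he : ∃ b ∈ B, b e ≠ 0 := h e ⟨v, hvA, hne⟩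
    have hge : g e e ≠ 0 := by
      simp only [hg, dif_pos he]
      exact he.choose_spec.2
    have heS : e ∈ S := ⟨g e, by
      rw [hbs, List.mem_map]
      exact ⟨e, by simp, rfl⟩, hge⟩
    exact hne (mem_ker_proj.1 hvk e heS)
  have ha := aux1 A (proj S)
  rw [hker] at ha
  simp only [finrank_bot, add_zero] at ha
  rw [← ha]
  exact hk

lemma mul_mem_hadPow (W : Submodule K (E → K)) {m n : ℕ} {a b : E → K}
    (ha : a ∈ hadPow W m) (hb : b ∈ hadPow W n) : a * b ∈ hadPow W (m + n) := by
  induction ha using Submodule.span_induction with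
  | mem a' ha' =>
      induction hb using Submodule.span_induction with
      | mem b' hb' =>
          obtain ⟨w, hw, rfl⟩ := ha'
          obtain ⟨w', hw', rfl⟩ := hb'
          refine Submodule.subset_span ⟨Fin.append w w', ?_, ?_⟩
          · intro i
            refine i.addCases (motive := fun i => Fin.append w w' i ∈ W) ?_ ?_
            · intro j; rw [Fin.append_left]; exact hw j
            · intro j; rw [Fin.append_right]; exact hw' j
          · rw [Fin.prod_univ_add]
            congr 1
            · exact Finset.prod_congr rfl fun j _ => (Fin.append_left w w' j).symm
            · exact Finset.prod_congr rfl fun j _ => (Fin.append_right w w' j).symm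
      | zero => rw [mul_zero]; exact Submodule.zero_mem _
      | add x y hx hy px py => rw [mul_add]; exact Submodule.add_mem _ px py
      | smul c x hx px => rw [mul_smul_comm]; exact Submodule.smul_mem _ _ px
  | zero => rw [zero_mul]; exact Submodule.zero_mem _
  | add x y hx hy px py => rw [add_mul]; exact Submodule.add_mem _ px py
  | smul c x hx px => rw [smul_mul_assoc]; exact Submodule.smul_mem _ _ px

lemma mulSpan_hadPow_le (W : Submodule K (E → K)) (m n : ℕ) :
    mulSpan (hadPow W m) (hadPow W n) ≤ hadPow W (m + n) := by
  rw [mulSpan, Submodule.span_le]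
  rintro v ⟨a, ha, b, hb, rfl⟩
  exact mul_mem_hadPow W ha hb

lemma supp_le (W : Submodule K (E → K)) {m n : ℕ} (hm : 1 ≤ m) (hn : 1 ≤ n) (e : E)
    (h : ∃ a ∈ hadPow W m, a e ≠ 0) : ∃ b ∈ hadPow W n, b e ≠ 0 := by
  obtain ⟨a, ha, hae⟩ := h
  have hW : ∃ w ∈ W, w e ≠ 0 := by
    by_contra hc
    push_neg at hc
    apply hae
    have hle : hadPow W m ≤ LinearMap.ker (LinearMap.proj (R := K) (φ := fun _ : E => K) e) := by
      rw [hadPow, Submodule.span_le]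
      rintro v ⟨w, hw, rfl⟩
      rw [SetLike.mem_coe, LinearMap.mem_ker]
      have : (∏ i, w i) e = ∏ i, w i e := by rw [Finset.prod_apply]
      simp only [LinearMap.proj_apply]
      rw [this]
      exact Finset.prod_eq_zero (Finset.mem_univ ⟨0, hm⟩) (hc _ (hw _))
    simpa using hle ha
  obtain ⟨w, hwW, hwe⟩ := hW
  refine ⟨∏ _i : Fin n, w, Submodule.subset_span ⟨fun _ => w, fun _ => hwW, rfl⟩, ?_⟩
  have : (∏ _i : Fin n, w) e = (w e) ^ n := by
    rw [Finset.prod_apply]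
    simp [Finset.prod_const, Finset.card_univ]
  rw [this]
  exact pow_ne_zero n hwe

end HadAux

theorem finrank_hadPow_mono {K : Type*} [Field K] {E : Type*} [Fintype E]
    (W : Submodule K (E → K)) (s s' : ℕ) (hs' : 1 ≤ s') (h : s' ≤ s) :
    Module.finrank K (hadPow W s') ≤ Module.finrank K (hadPow W s) := by
  rcases eq_or_lt_of_le h with rfl | hlt
  · exact le_rfl
  · have hn : 1 ≤ s - s' := by omega
    have h1 : ∀ e, (∃ a ∈ hadPow W s', a e ≠ 0) → ∃ b ∈ hadPow W (s - s'), b e ≠ 0 :=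
      fun e he => HadAux.supp_le W hs' hn e he
    have h2 := HadAux.key2 (hadPow W s') (hadPow W (s - s')) h1
    refine h2.trans ?_
    have h3 : HadAux.mulSpan (hadPow W s') (hadPow W (s - s')) ≤ hadPow W s := by
      have h4 := HadAux.mulSpan_hadPow_le W s' (s - s')
      rwa [Nat.add_sub_cancel' h] at h4
    exact Submodule.finrank_mono h3
end

section
/- Let W ⊆ K^E be a linear subspace. There exists a filtration F_1 ⊆ F_2 ⊆ ⋯ ⊆ F_t ⊆ ⋯ ⊆ E of subsets of E such that for all s' ≤ s, the projection π_{F_s} restricts to an injection on W^{⋆s'}, and restricts to a surjection (hence isomorphism) W^{⋆s} ≅ K^{F_s} when s' = s. -/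
/-- The coordinate projection `π_F : K^E → K^F` for `F ⊆ E`. -/
noncomputable def projF {K : Type*} [Field K] {E : Type*} (F : Set E) :
    (E → K) →ₗ[K] (F → K) :=
  LinearMap.funLeft K K (Subtype.val : F → E)

set_option linter.unusedSectionVars false

section aux
variable {K : Type*} [Field K] {E : Type*}

@[simp] lemma projF_apply (F : Set E) (x : E → K) (e : F) : projF F x e = x e := rfl

/-- Lemma B: support of Hadamard powers. -/
lemma hadPow_eval_eq_zero {W : Submodule K (E → K)} {s : ℕ} (hs : 1 ≤ s) {e : E}
    (hW : ∀ w ∈ W, w e = 0) : ∀ x ∈ hadPow W s, x e = 0 := by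
  have : hadPow W s ≤ LinearMap.ker (LinearMap.proj (R := K) (φ := fun _ : E => K) e) := by
    rw [hadPow, Submodule.span_le]
    rintro v ⟨w, hw, rfl⟩
    simp only [SetLike.mem_coe, LinearMap.mem_ker, LinearMap.proj_apply, Finset.prod_apply]
    exact Finset.prod_eq_zero (Finset.mem_univ ⟨0, hs⟩) (hW _ (hw _))
  intro x hx
  exact this hx

lemma hadPow_exists_support {W : Submodule K (E → K)} {s : ℕ} (hs : 1 ≤ s) {x : E → K}
    (hx : x ∈ hadPow W s) {e : E} (he : x e ≠ 0) : ∃ w ∈ W, w e ≠ 0 := by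
  by_contra h
  push_neg at h
  exact he (hadPow_eval_eq_zero hs h x hx)

/-- Lemma C: multiplication. -/
lemma hadPow_mul_mem {W : Submodule K (E → K)} {s : ℕ} {x w : E → K}
    (hx : x ∈ hadPow W s) (hw : w ∈ W) : x * w ∈ hadPow W (s + 1) := by
  have : hadPow W s ≤ (hadPow W (s + 1)).comap (LinearMap.mulRight K w) := by
    rw [hadPow, Submodule.span_le]
    rintro v ⟨w', hw', rfl⟩
    simp only [SetLike.mem_coe, Submodule.mem_comap, LinearMap.mulRight_apply]
    apply Submodule.subset_span
    refine ⟨Fin.snoc w' w, ?_, ?_⟩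
    · intro i
      refine Fin.lastCases ?_ ?_ i
      · simpa using hw
      · intro j; simpa using hw' j
    · rw [Fin.prod_univ_castSucc]
      simp
  exact this hx

lemma hadPow_mul_pow_mem {W : Submodule K (E → K)} {s : ℕ} {x w : E → K}
    (hx : x ∈ hadPow W s) (hw : w ∈ W) (k : ℕ) : x * w ^ k ∈ hadPow W (s + k) := by
  induction k with
  | zero => simpa using hx
  | succ n ih =>
      have : x * w ^ (n + 1) = (x * w ^ n) * w := by ring
      rw [this, ← Nat.add_assoc]
      exact hadPow_mul_mem ih hw

/-- Lemma E. -/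
lemma submodule_eq_top_of_single {ι : Type*} [Fintype ι] [DecidableEq ι] (U : Submodule K (ι → K))
    (h : ∀ i : ι, ∀ c : K, (Pi.single i c : ι → K) ∈ U) : U = ⊤ := by
  classical
  rw [eq_top_iff]
  rintro x -
  have hx : x = ∑ i, Pi.single i (x i) := by
    funext j
    simp [Pi.single_apply, Finset.sum_apply]
  rw [hx]
  exact Submodule.sum_mem _ fun i _ => h i (x i)

/-- Lemma D: surjectivity passes to the next power. -/
lemma surj_succ {W : Submodule K (E → K)} [Fintype E] {s : ℕ} {F : Set E}
    (hsupp : ∀ e ∈ F, ∃ w ∈ W, w e ≠ 0)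
    (hsurj : (hadPow W s).map (projF F) = ⊤) :
    (hadPow W (s + 1)).map (projF F) = ⊤ := by
  classical
  haveI : Fintype F := Fintype.ofFinite F
  haveI : DecidableEq F := Classical.decEq _
  apply submodule_eq_top_of_single
  intro e c
  obtain ⟨w, hwW, hwe⟩ := hsupp e e.2
  have ht : (Pi.single e (c * (w (e : E))⁻¹) : F → K) ∈ (hadPow W s).map (projF F) := by
    rw [hsurj]; trivial
  obtain ⟨u, hu, huv⟩ := ht
  refine ⟨u * w, hadPow_mul_mem hu hwW, ?_⟩
  funext e'
  have h1 : u e' = (Pi.single e (c * (w (e : E))⁻¹) : F → K) e' := by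
    rw [← huv]; rfl
  show u (e' : E) * w (e' : E) = _
  rw [h1]
  by_cases he' : e' = e
  · subst he'
    rw [Pi.single_eq_same, Pi.single_eq_same, mul_assoc, inv_mul_cancel₀ hwe, mul_one]
  · rw [Pi.single_eq_of_ne he', Pi.single_eq_of_ne he', zero_mul]


end aux

section aux2
variable {K : Type*} [Field K] {E : Type*} [Fintype E]

/-- Lemma A: extend a surjective coordinate set to a bijective one. -/
lemma extend_surj (V : Submodule K (E → K)) (F : Set E) (hF : V.map (projF F) = ⊤) :
    ∃ F' : Set E, F ⊆ F' ∧ V.map (projF F') = ⊤ ∧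
      ∀ v ∈ V, projF F' v = 0 → v = 0 := by
  classical
  set S : Set (Set E) := {G | F ⊆ G ∧ V.map (projF G) = ⊤} with hS
  obtain ⟨G, hGS, hmax⟩ := Set.Finite.exists_maximalFor Set.ncard S (Set.toFinite S)
    ⟨F, subset_rfl, hF⟩
  refine ⟨G, hGS.1, hGS.2, ?_⟩
  intro v hv hπ
  by_contra hv0
  obtain ⟨e, hve⟩ : ∃ e, v e ≠ 0 := Function.ne_iff.mp hv0
  have hvG : ∀ e' ∈ G, v e' = 0 := fun e' he' => congrFun hπ ⟨e', he'⟩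
  have heG : e ∉ G := fun h => hve (hvG e h)
  have hG' : insert e G ∈ S := by
    refine ⟨hGS.1.trans (Set.subset_insert _ _), ?_⟩
    rw [eq_top_iff]
    rintro t -
    have ht₀ : (fun g : G => t ⟨g, Set.mem_insert_of_mem _ g.2⟩) ∈ V.map (projF G) := by
      rw [hGS.2]; trivial
    obtain ⟨u, hu, hut⟩ := ht₀
    set c : K := (t ⟨e, Set.mem_insert _ _⟩ - u e) / v e with hc
    refine ⟨u + c • v, Submodule.add_mem _ hu (Submodule.smul_mem _ _ hv), ?_⟩
    funext e'
    obtain ⟨e', he'⟩ := e'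
    show u e' + c * v e' = t ⟨e', he'⟩
    rcases Set.mem_insert_iff.mp he' with h | h
    · subst h
      rw [hc, div_mul_cancel₀ _ hve]
      ring
    · rw [hvG e' h, mul_zero, add_zero]
      exact congrFun hut ⟨e', h⟩
  have hlt : G.ncard < (insert e G).ncard :=
    Set.ncard_lt_ncard (Set.ssubset_insert heG) (Set.toFinite _)
  have := hmax hG' hlt.le
  omega

/-- Lemma F: injectivity on lower powers. -/
lemma inj_lower {W : Submodule K (E → K)} {s s' : ℕ} (hs' : 1 ≤ s') (hle : s' ≤ s)
    {F : Set E} (hinj : ∀ v ∈ hadPow W s, projF F v = 0 → v = 0) :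
    ∀ x ∈ hadPow W s', projF F x = 0 → x = 0 := by
  intro x hx hπ
  by_contra hx0
  obtain ⟨e, hxe⟩ : ∃ e, x e ≠ 0 := Function.ne_iff.mp hx0
  obtain ⟨w, hwW, hwe⟩ := hadPow_exists_support hs' hx hxe
  have hy : x * w ^ (s - s') ∈ hadPow W s := by
    have := hadPow_mul_pow_mem hx hwW (s - s')
    rwa [Nat.add_sub_cancel' hle] at this
  have hyπ : projF F (x * w ^ (s - s')) = 0 := by
    funext e'
    show x e' * (w ^ (s - s')) e' = 0
    have h0 : x (e' : E) = 0 := congrFun hπ e'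
    rw [h0, zero_mul]
  have := hinj _ hy hyπ
  have : x e * (w e) ^ (s - s') = 0 := by
    have h := congrFun this e
    simpa using h
  exact (mul_ne_zero hxe (pow_ne_zero _ hwe)) this

end aux2

/-- Lemma 1: there is a filtration `F_1 ⊆ F_2 ⊆ ⋯ ⊆ E` such that for `s' ≤ s`
the projection `π_{F_s}` is injective on `W^{⋆ s'}` and maps `W^{⋆ s}` onto `K^{F_s}`. -/
theorem exists_filtration_hadPow {K : Type*} [Field K] {E : Type*} [Fintype E]
    (W : Submodule K (E → K)) :
    ∃ F : ℕ → Set E, (Monotone F) ∧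
      (∀ s s' : ℕ, 1 ≤ s' → s' ≤ s →
        (∀ u ∈ hadPow W s', ∀ v ∈ hadPow W s', projF (F s) u = projF (F s) v → u = v)) ∧
      (∀ s : ℕ, 1 ≤ s → (hadPow W s).map (projF (F s)) = ⊤) := by
  classical
  set Good : ℕ → Set E → Prop := fun s G =>
    (hadPow W s).map (projF G) = ⊤ ∧
    (1 ≤ s → ∀ v ∈ hadPow W s, projF G v = 0 → v = 0) ∧
    (∀ e ∈ G, ∃ w ∈ W, w e ≠ 0) with hGood
  have base : Good 0 (∅ : Set E) := by
    refine ⟨?_, ?_, ?_⟩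
    · haveI : IsEmpty ((∅ : Set E) : Set E) := by
        refine ⟨fun x => x.2⟩
      rw [eq_top_iff]
      rintro x -
      have : x = 0 := Subsingleton.elim _ _
      rw [this]
      exact Submodule.zero_mem _
    · intro h; omega
    · rintro e ⟨⟩
  have step : ∀ s (G : Set E), Good s G → ∃ G', G ⊆ G' ∧ Good (s + 1) G' := by
    intro s G hG
    have hsurj : (hadPow W (s + 1)).map (projF G) = ⊤ := surj_succ hG.2.2 hG.1
    obtain ⟨G', hsub, hsurj', hinj'⟩ := extend_surj (hadPow W (s + 1)) G hsurj
    refine ⟨G', hsub, hsurj', fun _ => hinj', ?_⟩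
    intro e he
    haveI : Fintype G' := Fintype.ofFinite _
    have ht : (Pi.single (⟨e, he⟩ : G') (1 : K)) ∈ (hadPow W (s + 1)).map (projF G') := by
      rw [hsurj']; trivial
    obtain ⟨u, hu, hut⟩ := ht
    have hue : u e ≠ 0 := by
      have := congrFun hut ⟨e, he⟩
      simp only [projF_apply, Pi.single_eq_same] at this
      rw [this]
      exact one_ne_zero
    exact hadPow_exists_support (Nat.le_add_left 1 s) hu hue
  choose f hf₁ hf₂ using step
  let g : (n : ℕ) → {G : Set E // Good n G} := fun n =>
    Nat.rec ⟨∅, base⟩ (fun k p => ⟨f k p.1 p.2, hf₂ k p.1 p.2⟩) n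
  refine ⟨fun n => (g n).1, ?_, ?_, ?_⟩
  · exact monotone_nat_of_le_succ fun n => hf₁ n (g n).1 (g n).2
  · intro s s' h1 hle u hu v hv heq
    have hinj := (g s).2.2.1 (h1.trans hle)
    have := inj_lower h1 hle hinj (u - v) (Submodule.sub_mem _ hu hv)
      (by rw [map_sub, heq, sub_self])
    exact sub_eq_zero.mp this
  · exact fun s _ => (g s).2.1
end

section
/- Over a field K of characteristic 2, the polynomial x_1 x_2 + x_2 x_3 + x_3 x_1 is linearly contact equivalent to x_1 x_2 + x_3². -/
open MvPolynomial

/-- Linear contact equivalence of polynomials. -/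
def ContactEquiv {K : Type*} [Field K] {σ τ : Type*} [Fintype σ] [Fintype τ]
    (φ : MvPolynomial σ K) (ψ : MvPolynomial τ K) : Prop :=
  ∃ (p : ℕ) (f : σ ↪ Fin p) (g : τ ↪ Fin p) (lam : Kˣ) (M : Matrix (Fin p) (Fin p) K),
    IsUnit M.det ∧
    MvPolynomial.rename f φ =
      (lam : K) • MvPolynomial.aeval
        (fun i => ∑ j, MvPolynomial.C (M i j) * MvPolynomial.X j)
        (MvPolynomial.rename g ψ)

/-- Over a field of characteristic 2, `x₁x₂ + x₂x₃ + x₃x₁` is contact equivalent to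
`x₁x₂ + x₃²`. -/
theorem triangle_contact_equiv_char_two {K : Type*} [Field K] [CharP K 2] :
    ContactEquiv
      (X 0 * X 1 + X 1 * X 2 + X 2 * X 0 : MvPolynomial (Fin 3) K)
      (X 0 * X 1 + X 2 ^ 2 : MvPolynomial (Fin 3) K) := by
  refine ⟨3, Function.Embedding.refl _, Function.Embedding.refl _, 1,
    !![1,0,1; 0,1,1; 0,0,1], ?_, ?_⟩
  · norm_num [Matrix.det_fin_three, Matrix.vecHead, Matrix.vecTail, Matrix.cons_val_two]
  · have h2 : (2 : MvPolynomial (Fin 3) K) = 0 := by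
      exact_mod_cast CharP.cast_eq_zero (MvPolynomial (Fin 3) K) 2
    simp only [Function.Embedding.refl, rename_id, Units.val_one, one_smul,
      map_add, map_mul, map_pow, aeval_X, Fin.sum_univ_three]
    norm_num [Matrix.cons_val_zero, Matrix.cons_val_one, Matrix.vecHead, Matrix.vecTail, Matrix.cons_val_two]
    linear_combination (-(X 2 ^ 2 : MvPolynomial (Fin 3) K)) * h2
end

section
/- For any λ ∈ K, the determinant of the symmetric matrix [[y_1, y_4, y_5],[y_4, y_2, λy_4],[y_5, λy_4, y_3]] is linearly contact equivalent to the determinant of [[y_1, y_4, y_5],[y_4, y_2, 0],[y_5, 0, y_3]], i.e. to y_3(y_1y_2 − y_4²) − y_2 y_5². -/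
open MvPolynomial

set_option maxHeartbeats 1600000 in
/-- For `λ ∈ K`, `det [[y₁, y₄, y₅],[y₄, y₂, λy₄],[y₅, λy₄, y₃]]` is contact equivalent
to `det [[y₁, y₄, y₅],[y₄, y₂, 0],[y₅, 0, y₃]] = y₃(y₁y₂ - y₄²) - y₂y₅²`. -/
theorem det_contact_equiv_lam {K : Type*} [Field K] (lam : K) :
    ContactEquiv
      (Matrix.det !![X 0, X 3, X 4;
                     X 3, X 1, C lam * X 3;
                     X 4, C lam * X 3, X 2] : MvPolynomial (Fin 5) K)
      (Matrix.det !![X 0, X 3, X 4;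
                     X 3, X 1, 0;
                     X 4, 0, X 2] : MvPolynomial (Fin 5) K) := by
  refine ⟨5, Function.Embedding.refl _, Function.Embedding.refl _, 1,
    !![1,0,0,0,0; 0,1,0,0,0; lam^2,0,1,0,-2*lam; 0,0,0,1,0; -lam,0,0,0,1], ?_, ?_⟩
  · have : Matrix.det (!![1,0,0,0,0; 0,1,0,0,0; lam^2,0,1,0,-2*lam; 0,0,0,1,0;
        -lam,0,0,0,1] : Matrix (Fin 5) (Fin 5) K) = 1 := by
      simp [Matrix.det_succ_row_zero, Fin.sum_univ_succ]
    rw [this]; exact isUnit_one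
  · have hM : (fun i : Fin 5 => ∑ j, (C (!![(1:K),0,0,0,0; 0,1,0,0,0;
        lam^2,0,1,0,-2*lam; 0,0,0,1,0; -lam,0,0,0,1] i j) : MvPolynomial (Fin 5) K) * X j) =
        ![X 0, X 1, C (lam^2) * X 0 + X 2 + C (-(2*lam)) * X 4, X 3, C (-lam) * X 0 + X 4] := by
      funext i
      fin_cases i <;> simp [Fin.sum_univ_five]
    rw [show ((Function.Embedding.refl (Fin 5)) : Fin 5 → Fin 5) = id from rfl, rename_id,
      hM]
    simp only [Matrix.det_fin_three, Units.val_one, one_smul, map_add, map_mul, map_sub,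
      map_neg, map_zero, aeval_X]
    simp [Matrix.det_fin_three, map_ofNat]
    ring
end

section
/- For any λ, μ ∈ K^*, the determinant of [[y_1, y_4, λy_4+μy_5],[y_4, y_2, y_5],[λy_4+μy_5, y_5, y_3]] is linearly contact equivalent to the determinant of [[y_1, y_4, y_4+y_5],[y_4, y_2, y_5],[y_4+y_5, y_5, y_3]]. -/
open MvPolynomial

/-- For `λ, μ ∈ K^*`, `det [[y₁, y₄, λy₄+μy₅],[y₄, y₂, y₅],[λy₄+μy₅, y₅, y₃]]` is contact
equivalent to the case `λ = μ = 1`. -/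
theorem det_contact_equiv_lam_mu' {K : Type*} [Field K] (lam mu : K)
    (hlam : lam ≠ 0) (hmu : mu ≠ 0) :
    ContactEquiv
      (Matrix.det !![X 0, X 3, C lam * X 3 + C mu * X 4;
                     X 3, X 1, X 4;
                     C lam * X 3 + C mu * X 4, X 4, X 2] : MvPolynomial (Fin 5) K)
      (Matrix.det !![X 0, X 3, X 3 + X 4;
                     X 3, X 1, X 4;
                     X 3 + X 4, X 4, X 2] : MvPolynomial (Fin 5) K) := by
  refine ⟨5, Function.Embedding.refl _, Function.Embedding.refl _,
    Units.mk0 (lam ^ 2 * mu ^ 2) (mul_ne_zero (pow_ne_zero _ hlam) (pow_ne_zero _ hmu)),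
    Matrix.diagonal ![mu⁻¹ ^ 2, 1, lam⁻¹ ^ 2, mu⁻¹, lam⁻¹], ?_, ?_⟩
  · rw [Matrix.det_diagonal]
    simp [isUnit_iff_ne_zero, Fin.prod_univ_five, hlam, hmu]
  · have hsum : ∀ d : Fin 5 → K, ∀ i : Fin 5,
        (∑ j, (C ((Matrix.diagonal d) i j) * X j : MvPolynomial (Fin 5) K))
          = C (d i) * X i := by
      intro d i
      rw [Fintype.sum_eq_single i]
      · simp
      · intro j hj
        simp [Matrix.diagonal_apply_ne _ (Ne.symm hj)]
    simp only [hsum]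
    simp [Matrix.det_fin_three, MvPolynomial.smul_eq_C_mul]
    rw [show ((mu:K)^2)⁻¹ = mu⁻¹*mu⁻¹ by rw [sq, mul_inv],
        show ((lam:K)^2)⁻¹ = lam⁻¹*lam⁻¹ by rw [sq, mul_inv], C_mul, C_mul]
    have hl : (C lam : MvPolynomial (Fin 5) K) * C lam⁻¹ = 1 := by
      rw [← C_mul, mul_inv_cancel₀ hlam, C_1]
    have hm : (C mu : MvPolynomial (Fin 5) K) * C mu⁻¹ = 1 := by
      rw [← C_mul, mul_inv_cancel₀ hmu, C_1]
    linear_combination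
      (-( (C lam * C lam⁻¹ + 1) * (C mu * C mu⁻¹)^2 * (X 0*X 1*X 2 - X 0*X 4^2 - X 3^2*X 2)
        + 2*C lam*(C mu*C mu⁻¹)^2 * X 3^2*X 4
        + 2*C mu*(C mu*C mu⁻¹)*(C lam*C lam⁻¹+1) * X 3*X 4^2
        - 2*C lam*C mu*(C mu*C mu⁻¹) * X 3*X 4*X 1
        - C mu^2*(C lam*C lam⁻¹+1) * X 4^2*X 1 )) * hl
      + (-( (C mu*C mu⁻¹+1) * (X 0*X 1*X 2 - X 0*X 4^2 - X 3^2*X 2)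
        + 2*C lam*(C mu*C mu⁻¹+1) * X 3^2*X 4
        + 2*C mu * X 3*X 4^2
        - C lam^2*(C mu*C mu⁻¹+1) * X 3^2*X 1
        - 2*C lam*C mu * X 3*X 4*X 1 )) * hm
end
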